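/- For any two 2-forms η_1, η_2 ∈ Λ^2 W* on a 5-dimensional vector space W*, the map Λ^2 W* → Λ^4 W* ⊕ Λ^4 W* given by ω ↦ (ω ∧ η_1, ω ∧ η_2) has nonzero kernel; i.e., there exists a nonzero 2-form ω with ω ∧ η_1 = 0 and ω ∧ η_2 = 0. -/

import Mathlib

open Module Submodule ExteriorAlgebra Pointwise

section Aux

variable {K W : Type*} [Field K] [AddCommGroup W] [Module K W]


set_option maxRecDepth 10000 in
lemma fix_of_involution : ∀ σ : Equiv.Perm (Fin 5), σ * σ = 1 → ∃ x, σ x = x := by decide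

lemma det_alt_five {K : Type*} [Field K] (C : Matrix (Fin 5) (Fin 5) K)
    (hd : ∀ i, C i i = 0) (ha : ∀ i j, C j i = -C i j) : C.det = 0 := by
  classical
  rw [Matrix.det_apply]
  have hzero : ∀ σ : Equiv.Perm (Fin 5), (∃ x, σ x = x) →
      (Equiv.Perm.sign σ • ∏ i, C (σ i) i : K) = 0 := by
    rintro σ ⟨x, hx⟩
    have : (∏ i, C (σ i) i) = 0 :=
      Finset.prod_eq_zero (Finset.mem_univ x) (by rw [hx]; exact hd x)
    rw [this, smul_zero]
  refine Finset.sum_ninvolution (fun σ => σ⁻¹) ?_ ?_ (fun _ => Finset.mem_univ _)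
    (fun σ => inv_inv σ)
  · intro σ
    by_cases hfix : ∃ x, σ x = x
    · rw [hzero σ hfix, hzero σ⁻¹ ⟨hfix.choose, by rw [← Equiv.Perm.eq_inv_iff_eq]; exact hfix.choose_spec.symm⟩, add_zero]
    · have h1 : (∏ i, C (σ⁻¹ i) i) = -∏ i, C (σ i) i := by
        calc (∏ i, C (σ⁻¹ i) i) = ∏ i, C (σ⁻¹ (σ i)) (σ i) :=
              (Equiv.prod_comp σ fun i => C (σ⁻¹ i) i).symm
          _ = ∏ i, C i (σ i) := by simp
          _ = ∏ i, -C (σ i) i := by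
              refine Finset.prod_congr rfl fun i _ => ?_
              rw [ha]
          _ = (-1 : K) ^ 5 * ∏ i, C (σ i) i := by
              rw [show (∏ i, -C (σ i) i) = ∏ i, (-1 : K) * C (σ i) i by simp,
                Finset.prod_mul_distrib, Finset.prod_const]
              simp
          _ = -∏ i, C (σ i) i := by ring
      rw [Equiv.Perm.sign_inv, h1, smul_neg, add_neg_cancel]
  · intro σ hne heq
    apply hne
    apply hzero
    apply fix_of_involution
    rw [mul_eq_one_iff_inv_eq]
    exact heq



lemma exists_superset_finrank_eq {K V : Type*} [Field K] [AddCommGroup V] [Module K V]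
    [FiniteDimensional K V] (n : ℕ) (hn : n ≤ finrank K V) :
    ∀ (d : ℕ) (S : Submodule K V), finrank K S ≤ n → n - finrank K S = d →
      ∃ T : Submodule K V, S ≤ T ∧ finrank K T = n := by
  intro d
  induction d with
  | zero =>
    intro S h1 h2
    exact ⟨S, le_rfl, le_antisymm h1 (Nat.le_of_sub_eq_zero h2)⟩
  | succ d ih =>
    intro S h1 h2
    have hlt : finrank K S < n := by omega
    obtain ⟨x, hx⟩ := S.exists_of_finrank_lt (lt_of_lt_of_le hlt hn)
    have hxS : x ∉ S := by simpa using hx 1 one_ne_zero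
    have hx0 : x ≠ 0 := fun h => hxS (h ▸ S.zero_mem)
    have hinf : S ⊓ (K ∙ x) = ⊥ := by
      rw [eq_bot_iff]
      rintro y ⟨hyS, hyx⟩
      obtain ⟨c, rfl⟩ := mem_span_singleton.mp hyx
      rcases eq_or_ne c 0 with rfl | hc
      · simp
      · exact absurd hyS (hx c hc)
    have hfr : finrank K ↑(S ⊔ (K ∙ x)) = finrank K S + 1 := by
      have := Submodule.finrank_sup_add_finrank_inf_eq S (K ∙ x)
      rw [hinf, finrank_bot, finrank_span_singleton hx0] at this
      omega
    obtain ⟨T, hT, hT2⟩ := ih (S ⊔ (K ∙ x)) (by omega) (by omega)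
    exact ⟨T, le_trans le_sup_left hT, hT2⟩




lemma iMulti_four_eq (v : Fin 4 → W) :
    ιMulti K 4 v = ((ι K (v 0) * ι K (v 1)) * ι K (v 2)) * ι K (v 3) := by
  simp [ιMulti_apply, List.ofFn_succ, mul_assoc, Matrix.vecTail, Function.comp]

lemma prod_mem_span_iMulti (c : Fin 4 → W) (q : Fin 4 → Fin 4) :
    ιMulti K 4 (c ∘ q) ∈ span K {ιMulti K 4 c} := by
  by_cases hinj : Function.Injective q
  · have hbij : Function.Bijective q :=
      (Fintype.bijective_iff_injective_and_card q).2 ⟨hinj, rfl⟩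
    set σ := Equiv.ofBijective q hbij with hσ
    have : c ∘ q = c ∘ σ := rfl
    rw [this, AlternatingMap.map_perm]
    rw [Units.smul_def]
    exact Submodule.smul_of_tower_mem _ _ (mem_span_singleton_self _)
  · obtain ⟨i, j, hij, hne⟩ := Function.not_injective_iff.mp hinj
    rw [(ιMulti K 4).map_eq_zero_of_eq (c ∘ q) (congrArg c hij) hne]
    exact zero_mem _

lemma pow_four_le_span (c : Fin 4 → W) :
    ((span K (Set.range c)).map (ι K)) ^ 4 ≤ span K {ιMulti K 4 c} := by
  have h1 : (span K (Set.range c)).map (ι K) =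
      span K (Set.range fun i => ι K (c i)) := by
    rw [Submodule.map_span, ← Set.range_comp]; rfl
  set S : Set (ExteriorAlgebra K W) := Set.range fun i => ι K (c i) with hS
  have h2 : ((span K (Set.range c)).map (ι K)) ^ 4 = span K (S * S * S * S) := by
    rw [h1, show (4 : ℕ) = 3 + 1 from rfl, pow_succ, show (3 : ℕ) = 2 + 1 from rfl,
      pow_succ, pow_two, span_mul_span, span_mul_span, span_mul_span]
  rw [h2, span_le]
  rintro x hx
  rw [Set.mem_mul] at hx
  obtain ⟨y, hy, z4, hz4, rfl⟩ := hx
  rw [Set.mem_mul] at hy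
  obtain ⟨y2, hy2, z3, hz3, rfl⟩ := hy
  rw [Set.mem_mul] at hy2
  obtain ⟨z1, hz1, z2, hz2, rfl⟩ := hy2
  obtain ⟨i1, rfl⟩ := hz1
  obtain ⟨i2, rfl⟩ := hz2
  obtain ⟨i3, rfl⟩ := hz3
  obtain ⟨i4, rfl⟩ := hz4
  show (ι K (c i1) * ι K (c i2) * ι K (c i3) * ι K (c i4)) ∈ span K {ιMulti K 4 c}
  rw [show ι K (c i1) * ι K (c i2) * ι K (c i3) * ι K (c i4)
      = ιMulti K 4 (c ∘ ![i1, i2, i3, i4]) by rw [iMulti_four_eq]; simp [Function.comp]]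
  exact prod_mem_span_iMulti (K := K) c ![i1, i2, i3, i4]




/-- The alternating 2-form `(x, y) ↦ φ x * ψ y - φ y * ψ x`. -/
noncomputable def altTwo (φ ψ : W →ₗ[K] K) : W [⋀^Fin 2]→ₗ[K] K :=
  (Matrix.detRowAlternating (n := Fin 2)).compLinearMap (LinearMap.pi ![φ, ψ])

lemma altTwo_apply (φ ψ : W →ₗ[K] K) (x y : W) :
    altTwo φ ψ ![x, y] = φ x * ψ y - φ y * ψ x := by
  show Matrix.det (Matrix.of fun i => (LinearMap.pi ![φ, ψ]) (![x, y] i)) = _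
  rw [Matrix.det_fin_two]
  simp [mul_comm]

/-- Evaluate the degree-2 component against an alternating 2-form. -/
noncomputable def evalTwo (φ ψ : W →ₗ[K] K) : ExteriorAlgebra K W →ₗ[K] K :=
  liftAlternating (fun i => match i with
    | 2 => altTwo φ ψ
    | _ => 0)

lemma evalTwo_ι_mul_ι (φ ψ : W →ₗ[K] K) (x y : W) :
    evalTwo φ ψ (ι K x * ι K y) = φ x * ψ y - φ y * ψ x := by
  have h1 : ι K x * ι K y = ιMulti K 2 ![x, y] := by
    simp [ιMulti_apply, List.ofFn_succ, Matrix.vecTail, Function.comp]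
  rw [h1, evalTwo, liftAlternating_apply_ιMulti]
  exact altTwo_apply φ ψ x y





lemma exists_dim_le_four (h5 : finrank K W = 5) (η : ExteriorAlgebra K W)
    (hη : η ∈ (LinearMap.range (ι K (M := W)) ^ 2 : Submodule K (ExteriorAlgebra K W))) :
    ∃ V : Submodule K W, finrank K V ≤ 4 ∧
      η ∈ (V.map (ι K) * V.map (ι K) : Submodule K (ExteriorAlgebra K W)) := by
  classical
  have hfd : FiniteDimensional K W := Module.finite_of_finrank_eq_succ h5
  let b : Basis (Fin 5) K W := finBasisOfFinrankEq K W h5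
  set g : Fin 5 × Fin 5 → ExteriorAlgebra K W := fun p => ι K (b p.1) * ι K (b p.2) with hg
  have hspan : (LinearMap.range (ι K (M := W)) ^ 2 : Submodule K (ExteriorAlgebra K W))
      ≤ span K (Set.range g) := by
    have hr : LinearMap.range (ι K (M := W)) = span K (Set.range fun i => ι K (b i)) := by
      conv_lhs => rw [← Submodule.map_top, ← b.span_eq, Submodule.map_span, ← Set.range_comp]
      rfl
    rw [pow_two, hr, span_mul_span, span_le]
    rintro x hx
    rw [Set.mem_mul] at hx
    obtain ⟨y, ⟨i, rfl⟩, z, ⟨j, rfl⟩, rfl⟩ := hx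
    exact subset_span ⟨(i, j), rfl⟩
  obtain ⟨d, hd⟩ := (mem_span_range_iff_exists_fun K).mp (hspan hη)
  set C : Matrix (Fin 5) (Fin 5) K := Matrix.of fun i j => d (i, j) - d (j, i) with hC
  have hdet : C.det = 0 := det_alt_five C (fun i => sub_self _)
    (fun i j => by show d (j, i) - d (i, j) = -(d (i, j) - d (j, i)); ring)
  obtain ⟨u, hu0, hu⟩ := (Matrix.exists_mulVec_eq_zero_iff).mpr hdet
  obtain ⟨k, hk'⟩ := Function.ne_iff.mp hu0
  have hk : u k ≠ 0 := by simpa using hk'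
  have hrow : ∀ i, (∑ j, (d (i, j) - d (j, i)) * u j) = 0 := by
    intro i
    have := congrFun hu i
    simpa [Matrix.mulVec, dotProduct, hC] using this
  -- the subspace
  set V : Submodule K W :=
    span K (Set.range fun j : {j : Fin 5 // j ≠ k} => u k • b ↑j - u ↑j • b k) with hV
  have hfr : finrank K V ≤ 4 := by
    refine le_trans (finrank_span_le_card _) ?_
    have : Fintype.card {j : Fin 5 // j ≠ k} = 4 := by
      simp [Fintype.card_subtype_compl]
    rw [Set.toFinset_range]
    exact le_trans (Finset.card_image_le.trans (by simp)) (le_of_eq this)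
  have hPV : ∀ i, u k • b i - u i • b k ∈ V := by
    intro i
    by_cases hik : i = k
    · subst hik; simp
    · exact subset_span ⟨⟨i, hik⟩, rfl⟩
  -- the vanishing sum
  have hw : (∑ p : Fin 5 × Fin 5, d p • (u p.1 • b p.2 - u p.2 • b p.1)) = 0 := by
    have h1 : (∑ p : Fin 5 × Fin 5, d p • (u p.1 • b p.2 - u p.2 • b p.1))
        = (∑ i, ∑ j, (d (i, j) * u i) • b j) - ∑ i, ∑ j, (d (i, j) * u j) • b i := by
      rw [Fintype.sum_prod_type, ← Finset.sum_sub_distrib]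
      refine Finset.sum_congr rfl fun i _ => ?_
      rw [← Finset.sum_sub_distrib]
      refine Finset.sum_congr rfl fun j _ => ?_
      rw [smul_sub, smul_smul, smul_smul]
    rw [h1, Finset.sum_comm (s := Finset.univ) (t := Finset.univ)
      (f := fun i j => (d (i, j) * u i) • b j), ← Finset.sum_sub_distrib]
    refine Finset.sum_eq_zero fun x _ => ?_
    rw [← Finset.sum_sub_distrib]
    have : ∀ y, (d (y, x) * u y) • b x - (d (x, y) * u y) • b x
        = -((d (x, y) - d (y, x)) * u y) • b x := by
      intro y; rw [← sub_smul]; ring_nf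
    rw [Finset.sum_congr rfl fun y _ => this y, ← Finset.sum_smul]
    have : (∑ y, -((d (x, y) - d (y, x)) * u y)) = 0 := by
      rw [Finset.sum_neg_distrib, hrow x, neg_zero]
    rw [this, zero_smul]
  -- the key termwise identity
  have hterm : ∀ p : Fin 5 × Fin 5,
      d p • (ι K (u k • b p.1 - u p.1 • b k) * ι K (u k • b p.2 - u p.2 • b k))
      = (u k * u k) • (d p • g p)
        + ι K ((u k * d p) • (u p.1 • b p.2 - u p.2 • b p.1)) * ι K (b k) := by
    rintro ⟨i, j⟩
    have hkk : ι K (b k) * ι K (b k) = 0 := ι_sq_zero _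
    have hswap : ι K (b k) * ι K (b j) = -(ι K (b j) * ι K (b k)) :=
      eq_neg_of_add_eq_zero_left (ι_add_mul_swap (b k) (b j))
    simp only [map_sub, map_smul, sub_mul, mul_sub, smul_mul_assoc, mul_smul_comm,
      hkk, hswap, smul_zero, hg]
    module
  have hkey : (∑ p : Fin 5 × Fin 5,
      d p • (ι K (u k • b p.1 - u p.1 • b k) * ι K (u k • b p.2 - u p.2 • b k)))
      = (u k * u k) • η := by
    rw [Finset.sum_congr rfl fun p _ => hterm p, Finset.sum_add_distrib,
      ← Finset.smul_sum, ← Finset.sum_mul, ← map_sum]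
    have h0 : (∑ p : Fin 5 × Fin 5, (u k * d p) • (u p.1 • b p.2 - u p.2 • b p.1)) = 0 := by
      have : ∀ p : Fin 5 × Fin 5, (u k * d p) • (u p.1 • b p.2 - u p.2 • b p.1)
          = u k • (d p • (u p.1 • b p.2 - u p.2 • b p.1)) := fun p => mul_smul _ _ _
      rw [Finset.sum_congr rfl fun p _ => this p, ← Finset.smul_sum, hw, smul_zero]
    rw [h0, map_zero, zero_mul, add_zero, hd]
  refine ⟨V, hfr, ?_⟩
  have hη' : η = (u k * u k)⁻¹ • (∑ p : Fin 5 × Fin 5,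
      d p • (ι K (u k • b p.1 - u p.1 • b k) * ι K (u k • b p.2 - u p.2 • b k))) := by
    rw [hkey, smul_smul, inv_mul_cancel₀ (mul_ne_zero hk hk), one_smul]
  rw [hη']
  refine Submodule.smul_mem _ _ (Submodule.sum_mem _ fun p _ => Submodule.smul_mem _ _ ?_)
  exact Submodule.mul_mem_mul (mem_map_of_mem (hPV p.1)) (mem_map_of_mem (hPV p.2))

end Aux

set_option maxHeartbeats 1000000 in
/-- For any two 2-forms `η₁, η₂ ∈ Λ²(W*)` on a 5-dimensional
vector space `W*` (here called `W`), there is a nonzero 2-form `ω ∈ Λ²(W*)` with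
`ω ∧ η₁ = 0` and `ω ∧ η₂ = 0` (the wedge products being taken in `Λ⁴(W*)`); i.e.
the map `Λ²(W*) → Λ⁴(W*) ⊕ Λ⁴(W*)`, `ω ↦ (ω ∧ η₁, ω ∧ η₂)` has nonzero kernel.
The degree-2 part of the exterior algebra is the submodule `(range ι)²`. -/
theorem exists_common_annihilating_two_form (K : Type*) [Field K]
    (W : Type*) [AddCommGroup W] [Module K W] (h5 : Module.finrank K W = 5)
    (η₁ η₂ : ExteriorAlgebra K W)
    (h₁ : η₁ ∈ (LinearMap.range (ExteriorAlgebra.ι K (M := W)) ^ 2 :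
      Submodule K (ExteriorAlgebra K W)))
    (h₂ : η₂ ∈ (LinearMap.range (ExteriorAlgebra.ι K (M := W)) ^ 2 :
      Submodule K (ExteriorAlgebra K W))) :
    ∃ ω ∈ (LinearMap.range (ExteriorAlgebra.ι K (M := W)) ^ 2 :
        Submodule K (ExteriorAlgebra K W)),
      ω ≠ 0 ∧ ω * η₁ = 0 ∧ ω * η₂ = 0 := by
  classical
  have hfd : FiniteDimensional K W := Module.finite_of_finrank_eq_succ h5
  obtain ⟨V₁', hV₁f, hη₁'⟩ := exists_dim_le_four h5 η₁ h₁
  obtain ⟨V₂', hV₂f, hη₂'⟩ := exists_dim_le_four h5 η₂ h₂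
  obtain ⟨V₁, hle₁, hV₁⟩ := exists_superset_finrank_eq 4 (by omega) (4 - finrank K V₁') V₁' hV₁f rfl
  obtain ⟨V₂, hle₂, hV₂⟩ := exists_superset_finrank_eq 4 (by omega) (4 - finrank K V₂') V₂' hV₂f rfl
  set Q₁ : Submodule K (ExteriorAlgebra K W) := V₁.map (ι K) with hQ₁
  set Q₂ : Submodule K (ExteriorAlgebra K W) := V₂.map (ι K) with hQ₂
  have hη₁V : η₁ ∈ Q₁ * Q₁ :=
    mul_le_mul' (Submodule.map_mono hle₁) (Submodule.map_mono hle₁) hη₁'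
  have hη₂V : η₂ ∈ Q₂ * Q₂ :=
    mul_le_mul' (Submodule.map_mono hle₂) (Submodule.map_mono hle₂) hη₂'
  -- the intersection has dimension at least 3
  have hU3 : 3 ≤ finrank K ↑(V₁ ⊓ V₂) := by
    have hsum := Submodule.finrank_sup_add_finrank_inf_eq V₁ V₂
    have hsup : finrank K ↑(V₁ ⊔ V₂) ≤ 5 := h5 ▸ Submodule.finrank_le _
    omega
  -- three linearly independent vectors in the intersection
  let βU : Basis (Fin (finrank K ↑(V₁ ⊓ V₂))) K ↑(V₁ ⊓ V₂) := finBasis K ↑(V₁ ⊓ V₂)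
  let e : Fin 3 → W := fun i => ↑(βU (Fin.castLE hU3 i))
  have he : ∀ i, e i ∈ V₁ ⊓ V₂ := fun i => (βU (Fin.castLE hU3 i)).2
  have hei : LinearIndependent K e :=
    ((βU.linearIndependent.comp (Fin.castLE hU3) (Fin.castLE_injective hU3)).map'
      (V₁ ⊓ V₂).subtype (Submodule.ker_subtype _))
  -- dual functionals for `e`
  let T : (Fin 3 → K) →ₗ[K] W := ∑ i, (LinearMap.proj i).smulRight (e i)
  have hT : ∀ c, T c = ∑ i, c i • e i := fun c => by
    simp [T, LinearMap.sum_apply]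
  have hTe : ∀ j, T (Pi.single j 1) = e j := by
    intro j
    rw [hT]
    simp [Pi.single_apply]
  have hker : LinearMap.ker T = ⊥ := by
    rw [LinearMap.ker_eq_bot']
    intro c hc
    rw [hT] at hc
    exact funext (Fintype.linearIndependent_iff.mp hei c hc)
  obtain ⟨gL, hgL⟩ := T.exists_leftInverse_of_injective hker
  let φ : Fin 3 → (W →ₗ[K] K) := fun i => (LinearMap.proj i).comp gL
  have hφ : ∀ i j, φ i (e j) = if j = i then 1 else 0 := by
    intro i j
    have : φ i (e j) = (gL.comp T) (Pi.single j 1) i := by rw [← hTe j]; rfl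
    rw [this, hgL]
    simp only [LinearMap.id_coe, id_eq, Pi.single_apply]
    rcases eq_or_ne i j with rfl | h
    · simp
    · simp [h, h.symm]
  -- the three products
  let v : Fin 3 → ExteriorAlgebra K W :=
    ![ι K (e 0) * ι K (e 1), ι K (e 0) * ι K (e 2), ι K (e 1) * ι K (e 2)]
  have hvind : LinearIndependent K v := by
    rw [Fintype.linearIndependent_iff]
    intro gc hgc
    rw [Fin.sum_univ_three] at hgc
    have ev : ∀ a b : Fin 3, evalTwo (φ a) (φ b)
        (gc 0 • v 0 + gc 1 • v 1 + gc 2 • v 2) = 0 := fun a b => by rw [hgc, map_zero]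
    have h01 := ev 0 1
    have h02 := ev 0 2
    have h12 := ev 1 2
    simp only [map_add, map_smul, v, Matrix.cons_val_zero, Matrix.cons_val_one,
      Matrix.head_cons, Matrix.cons_val_two, Matrix.tail_cons, evalTwo_ι_mul_ι, hφ] at h01 h02 h12
    norm_num [Fin.ext_iff] at h01 h02 h12
    intro i
    fin_cases i <;> assumption
  set D : Submodule K (ExteriorAlgebra K W) := span K (Set.range v) with hD
  haveI : FiniteDimensional K ↥D := FiniteDimensional.span_of_finite K (Set.finite_range v)
  have hDfr : finrank K ↥D = 3 := by
    rw [finrank_span_eq_card hvind]; simp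
  have hDQ : ∀ (V : Submodule K W), V₁ ⊓ V₂ ≤ V →
      D ≤ (V.map (ι K)) * (V.map (ι K)) := by
    intro V hV
    rw [hD, span_le]
    rintro x ⟨i, rfl⟩
    have hmem : ∀ a : Fin 3, ι K (e a) ∈ V.map (ι K) :=
      fun a => mem_map_of_mem (hV (he a))
    fin_cases i <;>
      exact Submodule.mul_mem_mul (hmem _) (hmem _)
  -- bounding the targets
  have hbound : ∀ (V : Submodule K W), finrank K V = 4 →
      ∃ x, (V.map (ι K) * V.map (ι K)) * (V.map (ι K) * V.map (ι K)) ≤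
        span K ({x} : Set (ExteriorAlgebra K W)) := by
    intro V hV4
    let β : Basis (Fin 4) K ↥V := finBasisOfFinrankEq K ↥V hV4
    let c : Fin 4 → W := fun i => ↑(β i)
    have hc : span K (Set.range c) = V := by
      have h1 : span K (Set.range c) = map V.subtype (span K (Set.range β)) := by
        rw [Submodule.map_span, ← Set.range_comp]; rfl
      rw [h1, β.span_eq, Submodule.map_top, Submodule.range_subtype]
    refine ⟨ιMulti K 4 c, ?_⟩
    have h2 := pow_four_le_span (K := K) c
    rw [hc] at h2
    have h3 : (V.map (ι K) * V.map (ι K)) * (V.map (ι K) * V.map (ι K))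
        = (V.map (ι K)) ^ 4 := by
      rw [show (4 : ℕ) = 2 + 2 from rfl, pow_add, pow_two]
    rw [h3]
    exact h2
  obtain ⟨x₁, hx₁⟩ := hbound V₁ hV₁
  obtain ⟨x₂, hx₂⟩ := hbound V₂ hV₂
  haveI : FiniteDimensional K ↥(span K ({x₁} : Set (ExteriorAlgebra K W))) :=
    FiniteDimensional.span_of_finite K (Set.finite_singleton _)
  haveI : FiniteDimensional K ↥(span K ({x₂} : Set (ExteriorAlgebra K W))) :=
    FiniteDimensional.span_of_finite K (Set.finite_singleton _)
  set T₁ : Submodule K (ExteriorAlgebra K W) := (Q₁ * Q₁) * (Q₁ * Q₁) with hT₁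
  set T₂ : Submodule K (ExteriorAlgebra K W) := (Q₂ * Q₂) * (Q₂ * Q₂) with hT₂
  haveI : FiniteDimensional K ↥T₁ := Submodule.finiteDimensional_of_le hx₁
  haveI : FiniteDimensional K ↥T₂ := Submodule.finiteDimensional_of_le hx₂
  have hfr₁ : finrank K ↥T₁ ≤ 1 := by
    refine le_trans (Submodule.finrank_mono hx₁) ?_
    refine le_trans (finrank_span_le_card _) ?_
    simp
  have hfr₂ : finrank K ↥T₂ ≤ 1 := by
    refine le_trans (Submodule.finrank_mono hx₂) ?_
    refine le_trans (finrank_span_le_card _) ?_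
    simp
  -- the linear map
  have hD₁ : D ≤ Q₁ * Q₁ := hDQ V₁ inf_le_left
  have hD₂ : D ≤ Q₂ * Q₂ := hDQ V₂ inf_le_right
  let Φ₁ : ↥D →ₗ[K] ↥T₁ := LinearMap.codRestrict T₁
    ((LinearMap.mulRight K η₁).comp D.subtype)
    (fun z => Submodule.mul_mem_mul (hD₁ z.2) hη₁V)
  let Φ₂ : ↥D →ₗ[K] ↥T₂ := LinearMap.codRestrict T₂
    ((LinearMap.mulRight K η₂).comp D.subtype)
    (fun z => Submodule.mul_mem_mul (hD₂ z.2) hη₂V)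
  let Φ : ↥D →ₗ[K] ↥T₁ × ↥T₂ := Φ₁.prod Φ₂
  have hnotinj : ¬ Function.Injective Φ := by
    intro hinj
    have hle := LinearMap.finrank_le_finrank_of_injective hinj
    rw [Module.finrank_prod, hDfr] at hle
    omega
  have hkerne : LinearMap.ker Φ ≠ ⊥ := fun h => hnotinj (LinearMap.ker_eq_bot.mp h)
  obtain ⟨ω', hωker, hω0⟩ := Submodule.exists_mem_ne_zero_of_ne_bot hkerne
  rw [LinearMap.mem_ker] at hωker
  have hΦ1 : Φ₁ ω' = 0 := by
    have := congrArg Prod.fst hωker; exact this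
  have hΦ2 : Φ₂ ω' = 0 := by
    have := congrArg Prod.snd hωker; exact this
  have hm1 : (↑ω' : ExteriorAlgebra K W) * η₁ = 0 := congrArg Subtype.val hΦ1
  have hm2 : (↑ω' : ExteriorAlgebra K W) * η₂ = 0 := congrArg Subtype.val hΦ2
  refine ⟨↑ω', ?_, ?_, hm1, hm2⟩
  · have : D ≤ (LinearMap.range (ExteriorAlgebra.ι K (M := W)) ^ 2 :
        Submodule K (ExteriorAlgebra K W)) := by
      refine le_trans hD₁ ?_
      rw [pow_two]
      exact mul_le_mul' (LinearMap.map_le_range) (LinearMap.map_le_range)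
    exact this ω'.2
  · exact fun h => hω0 (Subtype.ext h)
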